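/- Let ξ be an ℝᵐ-valued random vector with E[ξ] = 0, covariance matrix Q, E[‖ξ‖³] < ∞, and each component ξ⁽ˡ⁾ ≥ −c almost surely for some constant c > 0. Let μ ∈ ℝᵐ and let K be a compact subset of the simplex {f ∈ ℝᵐ : f⁽ˡ⁾ ≥ 0, Σ_ℓ f⁽ˡ⁾ ≤ 1}. Then there exist C > 0 and N such that for all n ≥ N and all f ∈ K: |n·E[ln(1 + f·μ/n + f·ξ/√n)] − (f·μ − (1/2)·f·Qf)| ≤ C·n^{−1/2} and |n·Var[ln(1 + f·μ/n + f·ξ/√n)] − f·Qf| ≤ C·n^{−1/2}. -/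

import Mathlib

open MeasureTheory ProbabilityTheory Real Filter Topology

section calcLemmas
open Set

private lemma hfm_mono_aux (g : ℝ → ℝ) (d : ℝ → ℝ)
    (hd : ∀ x : ℝ, 0 ≤ x → HasDerivAt g (d x) x)
    (hpos : ∀ x : ℝ, 0 < x → 0 ≤ d x) (t : ℝ) (ht : 0 ≤ t) : g 0 ≤ g t := by
  have cont : ContinuousOn g (Ici 0) := fun x hx => ((hd x hx).continuousAt).continuousWithinAt
  have mono : MonotoneOn g (Ici 0) := by
    apply monotoneOn_of_deriv_nonneg (convex_Ici 0) cont
    · intro x hx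
      rw [interior_Ici] at hx
      exact ((hd x (le_of_lt hx)).differentiableAt).differentiableWithinAt
    · intro x hx
      rw [interior_Ici] at hx
      rw [(hd x hx.le).deriv]
      exact hpos x hx
  exact mono (le_refl (0:ℝ)) ht ht

private lemma hfm_log_ge_quad {t : ℝ} (ht : 0 ≤ t) : t - t^2/2 ≤ Real.log (1+t) := by
  have hd : ∀ x : ℝ, 0 ≤ x →
      HasDerivAt (fun y => Real.log (1+y) - (y - y^2/2)) (x^2/(1+x)) x := by
    intro x hx
    have h1 : HasDerivAt (fun y : ℝ => 1 + y) 1 x := by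
      simpa using (hasDerivAt_id x).const_add (1:ℝ)
    have h2 : HasDerivAt (fun y : ℝ => Real.log (1+y)) (1/(1+x)) x := by
      simpa using h1.log (by positivity)
    have h3 : HasDerivAt (fun y : ℝ => y - y^2/2) (1 - (2*x)/2) x := by
      have h := (hasDerivAt_id' x).sub ((hasDerivAt_pow 2 x).div_const 2)
      exact h.congr_deriv (by norm_num)
    have h := h2.sub h3
    refine h.congr_deriv ?_
    have : (0:ℝ) < 1 + x := by linarith
    field_simp
    ring
  have key := hfm_mono_aux _ _ hd
    (fun x hx => div_nonneg (by positivity) (by linarith)) t ht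
  simp only [Real.log_one, add_zero] at key
  norm_num at key
  linarith [key]

private lemma hfm_log_le_cubic {t : ℝ} (ht : 0 ≤ t) :
    Real.log (1+t) ≤ t - t^2/2 + t^3/3 := by
  have hd : ∀ x : ℝ, 0 ≤ x →
      HasDerivAt (fun y => (y - y^2/2 + y^3/3) - Real.log (1+y)) (x^3/(1+x)) x := by
    intro x hx
    have h1 : HasDerivAt (fun y : ℝ => 1 + y) 1 x := by
      simpa using (hasDerivAt_id x).const_add (1:ℝ)
    have h2 : HasDerivAt (fun y : ℝ => Real.log (1+y)) (1/(1+x)) x := by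
      simpa using h1.log (by positivity)
    have h3 : HasDerivAt (fun y : ℝ => y - y^2/2 + y^3/3) (1 - (2*x)/2 + (3*x^2)/3) x := by
      have h := ((hasDerivAt_id' x).sub ((hasDerivAt_pow 2 x).div_const 2)).add
        ((hasDerivAt_pow 3 x).div_const 3)
      exact h.congr_deriv (by norm_num)
    have h := h3.sub h2
    refine h.congr_deriv ?_
    have : (0:ℝ) < 1 + x := by linarith
    field_simp
    ring
  have key := hfm_mono_aux _ _ hd
    (fun x hx => div_nonneg (by positivity) (by linarith)) t ht
  simp only [Real.log_one, add_zero] at key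
  norm_num at key
  linarith [key]

private lemma hfm_log_le_self {t : ℝ} (ht : -(1/2:ℝ) ≤ t) : Real.log (1+t) ≤ t := by
  have h1 : (0:ℝ) < 1 + t := by linarith
  have := Real.log_le_sub_one_of_pos h1
  linarith

private lemma hfm_neg_log_bound {t : ℝ} (ht : -(1/2:ℝ) ≤ t) :
    -Real.log (1+t) ≤ -t/(1+t) := by
  have h1 : (0:ℝ) < 1 + t := by linarith
  have h2 : (0:ℝ) < (1+t)⁻¹ := by positivity
  have := Real.log_le_sub_one_of_pos h2
  rw [Real.log_inv] at this
  have h3 : -Real.log (1+t) ≤ (1+t)⁻¹ - 1 := this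
  rw [inv_eq_one_div] at h3
  calc -Real.log (1+t) ≤ 1/(1+t) - 1 := h3
    _ = -t/(1+t) := by field_simp; ring

private lemma hfm_abs_log_le {t : ℝ} (ht : -(1/2:ℝ) ≤ t) : |Real.log (1+t)| ≤ 2*|t| := by
  rcases le_or_gt 0 t with h | h
  · have h1 : 0 ≤ Real.log (1+t) := Real.log_nonneg (by linarith)
    have h2 := hfm_log_le_self ht
    rw [abs_of_nonneg h1, abs_of_nonneg h]
    linarith
  · have h1 : (0:ℝ) < 1 + t := by linarith
    have hneg : Real.log (1+t) ≤ 0 := by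
      have := hfm_log_le_self ht; linarith
    rw [abs_of_nonpos hneg, abs_of_neg h]
    have h2 := hfm_neg_log_bound ht
    have h3 : -t/(1+t) ≤ 2*(-t) := by
      rw [div_le_iff₀ h1]
      nlinarith
    linarith

private lemma hfm_abs_log_sub_le {t : ℝ} (ht : -(1/2:ℝ) ≤ t) :
    |Real.log (1+t) - t| ≤ 2*t^2 := by
  have hub := hfm_log_le_self ht
  rcases le_or_gt 0 t with h | h
  · have hlb := hfm_log_ge_quad h
    rw [abs_le]; constructor <;> nlinarith
  · have h1 : (0:ℝ) < 1 + t := by linarith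
    have h2 := hfm_neg_log_bound ht
    have h3 : t - Real.log (1+t) ≤ t + -t/(1+t) := by linarith
    have h4 : t + -t/(1+t) ≤ 2*t^2 := by
      have h5 : t + -t/(1+t) = t^2/(1+t) := by field_simp; ring
      rw [h5, div_le_iff₀ h1]
      nlinarith [sq_nonneg t]
    rw [abs_le]; constructor <;> nlinarith

private lemma hfm_abs_log_taylor {t : ℝ} (ht : -(1/2:ℝ) ≤ t) :
    |Real.log (1+t) - (t - t^2/2)| ≤ 2*|t|^3 := by
  rcases le_or_gt 0 t with h | h
  · have h1 := hfm_log_ge_quad h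
    have h2 := hfm_log_le_cubic h
    rw [abs_of_nonneg h, abs_le]
    constructor <;> nlinarith
  · have hx : |(-t)| < 1 := by rw [abs_of_pos (by linarith : 0 < -t)]; linarith
    have key := Real.abs_log_sub_add_sum_range_le hx 2
    simp only [Finset.sum_range_succ, Finset.sum_range_zero] at key
    have e1 : (0:ℝ) + (-t)^(0+1)/((0:ℕ)+1) + (-t)^(1+1)/((1:ℕ)+1) + Real.log (1 - -t)
        = Real.log (1+t) - (t - t^2/2) := by push_cast; ring_nf
    rw [e1] at key
    have e2 : |(-t)|^(2+1)/(1-|(-t)|) ≤ 2*|t|^3 := by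
      rw [abs_neg]
      rw [abs_of_neg h]
      have h1 : (1:ℝ)/2 ≤ 1 - -t := by linarith
      have h2 : (0:ℝ) < 1 - -t := by linarith
      rw [div_le_iff₀ h2]
      have h3 : (0:ℝ) ≤ (-t)^3 * (1 + 2*t) :=
        mul_nonneg (pow_nonneg (by linarith) 3) (by linarith)
      norm_num
      nlinarith [h3]
    linarith

private lemma hfm_cube_split {x y : ℝ} (hx : 0 ≤ x) (hy : 0 ≤ y) :
    (x+y)^3 ≤ 4*(x^3+y^3) := by nlinarith [sq_nonneg (x-y), mul_nonneg hx hy]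

end calcLemmas

set_option maxHeartbeats 8000000 in
theorem high_frequency_mean_variance_expansion
    {Ω : Type*} [MeasurableSpace Ω] (P : Measure Ω) [IsProbabilityMeasure P]
    {m : ℕ} (ξ : Ω → Fin m → ℝ) (hmeas : Measurable ξ)
    (hmean : ∀ i, ∫ ω, ξ ω i ∂P = 0)
    (Q : Matrix (Fin m) (Fin m) ℝ)
    (hQ : ∀ i j, Q i j = ∫ ω, ξ ω i * ξ ω j ∂P)
    (hmom3 : Integrable (fun ω => ‖ξ ω‖ ^ 3) P)
    (c : ℝ) (hc : 0 < c) (hbd : ∀ i, ∀ᵐ ω ∂P, -c ≤ ξ ω i)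
    (μv : Fin m → ℝ)
    (K : Set (Fin m → ℝ)) (hK : IsCompact K)
    (hKS : K ⊆ {f : Fin m → ℝ | (∀ i, 0 ≤ f i) ∧ ∑ i, f i ≤ 1}) :
    ∃ C : ℝ, 0 < C ∧ ∃ N : ℕ, ∀ n : ℕ, N ≤ n → ∀ f ∈ K,
      |(n : ℝ) * ∫ ω, Real.log (1 + (∑ i, f i * μv i) / n
            + (∑ i, f i * ξ ω i) / Real.sqrt n) ∂P
          - ((∑ i, f i * μv i) - (1 / 2) * ∑ i, ∑ j, f i * Q i j * f j)|
        ≤ C / Real.sqrt n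
      ∧ |(n : ℝ) * variance (fun ω => Real.log (1 + (∑ i, f i * μv i) / n
            + (∑ i, f i * ξ ω i) / Real.sqrt n)) P
          - ∑ i, ∑ j, f i * Q i j * f j|
        ≤ C / Real.sqrt n := by
  classical
  -- component measurability and integrability
  have hmeasi : ∀ i, Measurable (fun ω => ξ ω i) :=
    fun i => (measurable_pi_apply i).comp hmeas
  have hnormmeas : Measurable (fun ω => ‖ξ ω‖) := hmeas.norm
  have hInt1 : Integrable (fun ω => ‖ξ ω‖) P := by
    refine (integrable_const (1:ℝ)).add hmom3 |>.mono
      hnormmeas.aestronglyMeasurable (Eventually.of_forall fun ω => ?_)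
    have h0 : (0:ℝ) ≤ ‖ξ ω‖ := norm_nonneg _
    have : ‖ξ ω‖ ≤ 1 + ‖ξ ω‖^3 := by nlinarith only [h0, sq_nonneg (‖ξ ω‖ - 1), sq_nonneg (2*‖ξ ω‖ - 1)]
    have h1 : (0:ℝ) ≤ 1 + ‖ξ ω‖^3 := by positivity
    simpa [abs_of_nonneg h0, abs_of_nonneg h1, Real.norm_eq_abs] using this
  have hInt2 : Integrable (fun ω => ‖ξ ω‖^2) P := by
    refine (integrable_const (1:ℝ)).add hmom3 |>.mono
      (hnormmeas.pow_const 2).aestronglyMeasurable (Eventually.of_forall fun ω => ?_)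
    have h0 : (0:ℝ) ≤ ‖ξ ω‖ := norm_nonneg _
    have : ‖ξ ω‖^2 ≤ 1 + ‖ξ ω‖^3 := by nlinarith only [h0, sq_nonneg (‖ξ ω‖ - 1), sq_nonneg ‖ξ ω‖, sq_nonneg (2*‖ξ ω‖ - 1)]
    have h1 : (0:ℝ) ≤ 1 + ‖ξ ω‖^3 := by positivity
    simpa [abs_of_nonneg (by positivity : (0:ℝ) ≤ ‖ξ ω‖^2), abs_of_nonneg h1,
      Real.norm_eq_abs] using this
  have hIntξ : ∀ i, Integrable (fun ω => ξ ω i) P := by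
    intro i
    refine hInt1.mono (hmeasi i).aestronglyMeasurable (Eventually.of_forall fun ω => ?_)
    simpa [Real.norm_eq_abs, abs_of_nonneg (norm_nonneg (ξ ω))] using norm_le_pi_norm (ξ ω) i
  have hIntξξ : ∀ i j, Integrable (fun ω => ξ ω i * ξ ω j) P := by
    intro i j
    refine hInt2.mono ((hmeasi i).mul (hmeasi j)).aestronglyMeasurable
      (Eventually.of_forall fun ω => ?_)
    have hi := norm_le_pi_norm (ξ ω) i
    have hj := norm_le_pi_norm (ξ ω) j
    simp only [Real.norm_eq_abs] at hi hj ⊢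
    rw [abs_of_nonneg (by positivity : (0:ℝ) ≤ ‖ξ ω‖^2), abs_mul]
    calc |ξ ω i| * |ξ ω j| ≤ ‖ξ ω‖ * ‖ξ ω‖ :=
          mul_le_mul hi hj (abs_nonneg _) (norm_nonneg _)
      _ = ‖ξ ω‖^2 := (sq ‖ξ ω‖).symm
  -- constants
  set A := ‖μv‖ with hA_def
  have hA : 0 ≤ A := norm_nonneg _
  set M := ∫ ω, ‖ξ ω‖^3 ∂P with hM_def
  have hM : 0 ≤ M := integral_nonneg (fun ω => by positivity)
  set M2 := ∫ ω, ‖ξ ω‖^2 ∂P with hM2_def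
  have hM2 : 0 ≤ M2 := integral_nonneg (fun ω => by positivity)
  set C₁ := A^2/2 + 8*(A^3 + M) with hC₁_def
  have hC₁ : 0 ≤ C₁ := by positivity
  set C₂ := A + M2/2 + C₁ with hC₂_def
  have hC₂ : 0 ≤ C₂ := by positivity
  set C₃ := A^2 + 24*(A^3 + M) + C₂^2 with hC₃_def
  have hC₃ : 0 ≤ C₃ := by positivity
  refine ⟨C₁ + C₃ + 1, by positivity, ⌈(2*(A+c)+1)^2⌉₊, ?_⟩
  intro n hn f hf
  obtain ⟨hf1, hf2⟩ := hKS hf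
  -- facts about n
  have hnR : ((2*(A+c)+1)^2 : ℝ) ≤ (n:ℝ) := le_trans (Nat.le_ceil _) (by exact_mod_cast hn)
  have hnn : (0:ℝ) ≤ (n:ℝ) := le_trans (by positivity) hnR
  set rn := Real.sqrt (n:ℝ) with hrn_def
  have hrn_ge : 2*(A+c)+1 ≤ rn := by
    have h := Real.sqrt_le_sqrt hnR
    rwa [Real.sqrt_sq (by positivity)] at h
  have hrn1 : (1:ℝ) ≤ rn := by nlinarith only [hrn_ge, hA, hc.le]
  have hrn0 : (0:ℝ) < rn := lt_of_lt_of_le one_pos hrn1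
  have hrn2 : rn^2 = (n:ℝ) := Real.sq_sqrt hnn
  rw [← hrn2]
  -- abbreviations
  set a := ∑ i, f i * μv i with ha_def
  set q := ∑ i, ∑ j, f i * Q i j * f j with hq_def
  set S : Ω → ℝ := fun ω => ∑ i, f i * ξ ω i with hS_def
  have hSfold : ∀ ω, (∑ i, f i * ξ ω i) = S ω := fun _ => rfl
  simp only [hSfold]
  -- facts about f
  have ha : |a| ≤ A := by
    calc |a| ≤ ∑ i, |f i * μv i| := Finset.abs_sum_le_sum_abs _ _
      _ ≤ ∑ i, f i * A := by
          refine Finset.sum_le_sum fun i _ => ?_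
          rw [abs_mul, abs_of_nonneg (hf1 i)]
          exact mul_le_mul_of_nonneg_left
            (le_trans (norm_le_pi_norm μv i) le_rfl) (hf1 i)
      _ = (∑ i, f i) * A := by rw [Finset.sum_mul]
      _ ≤ 1 * A := mul_le_mul_of_nonneg_right hf2 hA
      _ = A := one_mul A
  have habsS : ∀ ω, |S ω| ≤ ‖ξ ω‖ := by
    intro ω
    calc |S ω| ≤ ∑ i, |f i * ξ ω i| := Finset.abs_sum_le_sum_abs _ _
      _ ≤ ∑ i, f i * ‖ξ ω‖ := by
          refine Finset.sum_le_sum fun i _ => ?_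
          rw [abs_mul, abs_of_nonneg (hf1 i)]
          exact mul_le_mul_of_nonneg_left (norm_le_pi_norm (ξ ω) i) (hf1 i)
      _ = (∑ i, f i) * ‖ξ ω‖ := by rw [Finset.sum_mul]
      _ ≤ 1 * ‖ξ ω‖ := mul_le_mul_of_nonneg_right hf2 (norm_nonneg _)
      _ = ‖ξ ω‖ := one_mul _
  have hSmeas : Measurable S :=
    Finset.measurable_sum Finset.univ (fun i _ => (hmeasi i).const_mul (f i))
  have hIntS : Integrable S P :=
    integrable_finset_sum _ (fun i _ => ((hIntξ i).const_mul (f i)))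
  have hES : ∫ ω, S ω ∂P = 0 := by
    rw [hS_def, integral_finset_sum _ (fun i _ => ((hIntξ i).const_mul (f i)))]
    refine Finset.sum_eq_zero fun i _ => ?_
    rw [integral_const_mul, hmean i, mul_zero]
  have hIntS2 : Integrable (fun ω => S ω^2) P := by
    refine hInt2.mono (hSmeas.pow_const 2).aestronglyMeasurable
      (Eventually.of_forall fun ω => ?_)
    simp only [Real.norm_eq_abs]
    rw [abs_of_nonneg (by positivity : (0:ℝ) ≤ S ω^2),
      abs_of_nonneg (by positivity : (0:ℝ) ≤ ‖ξ ω‖^2)]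
    have h9 := habsS ω
    nlinarith only [h9, abs_nonneg (S ω), neg_abs_le (S ω), le_abs_self (S ω)]
  have hES2 : ∫ ω, S ω^2 ∂P = q := by
    have hterm : ∀ ω, S ω^2 = ∑ i, ∑ j, (f i * f j) * (ξ ω i * ξ ω j) := by
      intro ω
      rw [hS_def, sq, Finset.sum_mul_sum]
      exact Finset.sum_congr rfl fun i _ => Finset.sum_congr rfl fun j _ => by ring
    simp only [hterm]
    rw [integral_finset_sum _ (fun i _ => integrable_finset_sum _
      (fun j _ => (hIntξξ i j).const_mul _))]
    refine Finset.sum_congr rfl fun i _ => ?_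
    rw [integral_finset_sum _ (fun j _ => (hIntξξ i j).const_mul _)]
    refine Finset.sum_congr rfl fun j _ => ?_
    rw [integral_const_mul, ← hQ i j]
    ring
  have hq0 : 0 ≤ q := by
    rw [← hES2]; exact integral_nonneg fun ω => by positivity
  have hqM2 : q ≤ M2 := by
    rw [← hES2, hM2_def]
    refine integral_mono hIntS2 hInt2 fun ω => ?_
    have h9 := habsS ω
    nlinarith only [h9, abs_nonneg (S ω), neg_abs_le (S ω), le_abs_self (S ω)]
  have hSc : ∀ᵐ ω ∂P, -c ≤ S ω := by
    have hall : ∀ᵐ ω ∂P, ∀ i, -c ≤ ξ ω i := (ae_all_iff).2 hbd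
    filter_upwards [hall] with ω hω
    calc -c ≤ (∑ i, f i) * (-c) := by nlinarith only [hf2, hc, Finset.sum_nonneg (fun i (_ : i ∈ Finset.univ) => hf1 i)]
      _ = ∑ i, f i * (-c) := by rw [Finset.sum_mul]
      _ ≤ ∑ i, f i * ξ ω i := Finset.sum_le_sum fun i _ =>
          mul_le_mul_of_nonneg_left (hω i) (hf1 i)
  -- the shifted variable t and the log variable X
  set t : Ω → ℝ := fun ω => a/rn^2 + S ω/rn with ht_def
  have htlb : ∀ᵐ ω ∂P, -(1/2:ℝ) ≤ t ω := by
    filter_upwards [hSc] with ω hω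
    have ha1 : -A ≤ a := (abs_le.1 ha).1
    have hrw : t ω = (a + S ω * rn)/rn^2 := by
      rw [ht_def]
      field_simp
    rw [hrw, le_div_iff₀ (by positivity)]
    nlinarith only [ha1, hω, hrn0.le, hrn1, hc.le, hA,
      mul_nonneg (by linarith only [hω] : (0:ℝ) ≤ S ω + c) hrn0.le,
      mul_le_mul_of_nonneg_right hrn_ge hrn0.le, sq_nonneg rn]
  set X : Ω → ℝ := fun ω => Real.log (1 + a/rn^2 + S ω/rn) with hX_def
  have hXlog : ∀ ω, X ω = Real.log (1 + t ω) := by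
    intro ω
    simp only [hX_def, ht_def]
    rw [add_assoc]
  have hXt : ∀ᵐ ω ∂P, |X ω - (t ω - t ω^2/2)| ≤ 2*|t ω|^3 ∧ |X ω| ≤ 2*|t ω|
      ∧ |X ω - t ω| ≤ 2*t ω^2 := by
    filter_upwards [htlb] with ω hω
    rw [hXlog ω]
    exact ⟨hfm_abs_log_taylor hω, hfm_abs_log_le hω, hfm_abs_log_sub_le hω⟩
  have htabs : ∀ ω, |t ω| ≤ (A + ‖ξ ω‖)/rn := by
    intro ω
    have h1 : |t ω| ≤ |a|/rn^2 + |S ω|/rn := by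
      rw [ht_def]
      refine le_trans (abs_add_le _ _) ?_
      rw [abs_div, abs_div, abs_of_nonneg (by positivity : (0:ℝ) ≤ rn^2),
        abs_of_nonneg hrn0.le]
    have h2 : |a|/rn^2 ≤ A/rn := div_le_div₀ hA ha hrn0 (by nlinarith only [hrn1, sq_nonneg (rn - 1)])
    have h3 : |S ω|/rn ≤ ‖ξ ω‖/rn := by gcongr; exact habsS ω
    calc |t ω| ≤ A/rn + ‖ξ ω‖/rn := by linarith only [h1, h2, h3]
      _ = (A + ‖ξ ω‖)/rn := by ring
  have htcube : ∀ ω, 2*|t ω|^3 ≤ (A^3 + ‖ξ ω‖^3) * (8/rn^3) := by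
    intro ω
    have h1 : |t ω|^3 ≤ ((A + ‖ξ ω‖)/rn)^3 :=
      pow_le_pow_left₀ (abs_nonneg _) (htabs ω) 3
    have h2 : ((A + ‖ξ ω‖)/rn)^3 = (A + ‖ξ ω‖)^3 / rn^3 := div_pow _ _ 3
    have h3 : (A + ‖ξ ω‖)^3 ≤ 4*(A^3 + ‖ξ ω‖^3) := hfm_cube_split hA (norm_nonneg _)
    have h4 : (A + ‖ξ ω‖)^3/rn^3 ≤ (4*(A^3 + ‖ξ ω‖^3))/rn^3 := by gcongr
    calc 2*|t ω|^3 ≤ 2*((4*(A^3 + ‖ξ ω‖^3))/rn^3) := by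
          rw [h2] at h1; linarith only [h1, h4]
      _ = (A^3 + ‖ξ ω‖^3)*(8/rn^3) := by ring
  have hg3int : Integrable (fun ω => (A^3 + ‖ξ ω‖^3) * (8/rn^3)) P :=
    ((integrable_const (A^3)).add hmom3).mul_const _
  have hg3val : ∫ ω, (A^3 + ‖ξ ω‖^3) * (8/rn^3) ∂P = (A^3 + M) * (8/rn^3) := by
    rw [integral_mul_const, integral_add (integrable_const _) hmom3, integral_const]
    simp [hM_def]
  -- integrals of t and t²
  have htint : Integrable t P := (integrable_const (a/rn^2)).add (hIntS.div_const rn)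
  have hIt : ∫ ω, t ω ∂P = a/rn^2 := by
    rw [ht_def, integral_add (integrable_const _) (hIntS.div_const rn), integral_const,
      integral_div, hES]
    simp
  have ht2eq : (fun ω => t ω^2) = fun ω => ((a/rn^2)^2 + (2*a/rn^3) * S ω + S ω^2/rn^2) := by
    funext ω
    rw [ht_def]
    have hne : rn ≠ 0 := ne_of_gt hrn0
    field_simp
    ring
  have ht2int : Integrable (fun ω => t ω^2) P := by
    rw [ht2eq]
    exact ((integrable_const _).add (hIntS.const_mul _)).add (hIntS2.div_const _)
  have hIt2 : ∫ ω, t ω^2 ∂P = (a/rn^2)^2 + q/rn^2 := by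
    have i1 : Integrable (fun ω => (a/rn^2)^2 + (2*a/rn^3) * S ω) P :=
      (integrable_const _).add (hIntS.const_mul _)
    have i2 : Integrable (fun ω => S ω^2/rn^2) P := hIntS2.div_const _
    have i3 : Integrable (fun ω => (2*a/rn^3) * S ω) P := hIntS.const_mul _
    rw [ht2eq, integral_add i1 i2, integral_add (integrable_const _) i3, integral_const,
      integral_const_mul, integral_div, hES, hES2]
    simp
  -- integrability of X and X²
  have hXmeas : Measurable X :=
    Real.measurable_log.comp (measurable_const.add (hSmeas.div_const rn))
  have hXbd : ∀ᵐ ω ∂P, ‖X ω‖ ≤ 2*(A + ‖ξ ω‖) := by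
    filter_upwards [hXt] with ω hω
    have h1 := htabs ω
    have h2 : (A + ‖ξ ω‖)/rn ≤ A + ‖ξ ω‖ := by
      rw [div_le_iff₀ hrn0]
      nlinarith only [hA, hrn1, norm_nonneg (ξ ω), mul_le_mul_of_nonneg_right hrn1 (by positivity : (0:ℝ) ≤ A + ‖ξ ω‖)]
    rw [Real.norm_eq_abs]
    calc |X ω| ≤ 2*|t ω| := hω.2.1
      _ ≤ 2*((A + ‖ξ ω‖)/rn) := by linarith only [h1]
      _ ≤ 2*(A + ‖ξ ω‖) := by linarith only [h2]
  have hXint : Integrable X P :=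
    (((integrable_const A).add hInt1).const_mul 2).mono' hXmeas.aestronglyMeasurable hXbd
  have hX2bd : ∀ᵐ ω ∂P, ‖X ω^2‖ ≤ (A^2 + ‖ξ ω‖^2) * 8 := by
    filter_upwards [hXbd] with ω hω
    rw [Real.norm_eq_abs] at hω
    rw [Real.norm_eq_abs, abs_of_nonneg (sq_nonneg _)]
    have h1 := mul_self_le_mul_self (abs_nonneg (X ω)) hω
    nlinarith only [h1, sq_abs (X ω), sq_nonneg (A - ‖ξ ω‖)]
  have hX2int : Integrable (fun ω => X ω^2) P :=
    (((integrable_const (A^2)).add hInt2).mul_const 8).mono'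
      (hXmeas.pow_const 2).aestronglyMeasurable hX2bd
  -- remainder of the Taylor expansion
  set R : Ω → ℝ := fun ω => X ω - (t ω - t ω^2/2) with hR_def
  have itt : Integrable (fun ω => t ω - t ω^2/2) P := htint.sub (ht2int.div_const 2)
  have hRint : Integrable R P := hXint.sub itt
  have hRbd : ∀ᵐ ω ∂P, ‖R ω‖ ≤ (A^3 + ‖ξ ω‖^3)*(8/rn^3) := by
    filter_upwards [hXt] with ω hω
    rw [Real.norm_eq_abs, hR_def]
    calc |X ω - (t ω - t ω^2/2)| ≤ 2*|t ω|^3 := hω.1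
      _ ≤ (A^3 + ‖ξ ω‖^3)*(8/rn^3) := htcube ω
  have hIR : |∫ ω, R ω ∂P| ≤ (A^3 + M)*(8/rn^3) := by
    have h := norm_integral_le_of_norm_le hg3int hRbd
    rwa [Real.norm_eq_abs, hg3val] at h
  have hXsplit : ∫ ω, X ω ∂P = (∫ ω, (t ω - t ω^2/2) ∂P) + ∫ ω, R ω ∂P := by
    rw [← integral_add itt hRint]
    congr 1
    funext ω
    simp only [hR_def]
    ring
  have hItt : ∫ ω, (t ω - t ω^2/2) ∂P = a/rn^2 - ((a/rn^2)^2 + q/rn^2)/2 := by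
    have i2 : Integrable (fun ω => t ω^2/2) P := ht2int.div_const 2
    rw [integral_sub htint i2, integral_div, hIt, hIt2]
  -- mean estimate
  have ha2 : a^2 ≤ A^2 := by nlinarith only [ha, sq_abs a, abs_nonneg a]
  have hmean_est : |rn^2 * (∫ ω, X ω ∂P) - (a - 1/2*q)| ≤ C₁/rn := by
    have heq : rn^2 * (∫ ω, X ω ∂P) - (a - 1/2*q)
        = rn^2 * (∫ ω, R ω ∂P) - a^2/(2*rn^2) := by
      rw [hXsplit, hItt]
      field_simp
      ring
    rw [heq]
    have h1 : |rn^2 * (∫ ω, R ω ∂P)| ≤ 8*(A^3 + M)/rn := by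
      rw [abs_mul, abs_of_nonneg (by positivity : (0:ℝ) ≤ rn^2)]
      calc rn^2 * |∫ ω, R ω ∂P| ≤ rn^2 * ((A^3 + M)*(8/rn^3)) := by
            exact mul_le_mul_of_nonneg_left hIR (by positivity)
        _ = 8*(A^3 + M)/rn := by field_simp
    have h2 : |a^2/(2*rn^2)| ≤ (A^2/2)/rn := by
      rw [abs_div, abs_of_nonneg (sq_nonneg a),
        abs_of_nonneg (by positivity : (0:ℝ) ≤ 2*rn^2)]
      rw [div_le_div_iff₀ (by positivity) (by positivity)]
      nlinarith only [mul_le_mul_of_nonneg_right ha2 hrn0.le,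
        mul_nonneg (sq_nonneg A) (by nlinarith only [hrn1, sq_nonneg (rn - 1)] : (0:ℝ) ≤ rn^2 - rn)]
    calc |rn^2 * (∫ ω, R ω ∂P) - a^2/(2*rn^2)|
        ≤ |rn^2 * (∫ ω, R ω ∂P)| + |a^2/(2*rn^2)| := abs_sub _ _
      _ ≤ 8*(A^3 + M)/rn + (A^2/2)/rn := by linarith only [h1, h2]
      _ = C₁/rn := by rw [hC₁_def]; ring
  refine ⟨?_, ?_⟩
  · calc |rn^2 * (∫ ω, X ω ∂P) - (a - 1/2*q)| ≤ C₁/rn := hmean_est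
      _ ≤ (C₁ + C₃ + 1)/rn := by gcongr <;> linarith only [hC₁, hC₃]
  -- variance estimate
  · have hmem2 : MemLp X 2 P :=
      (memLp_two_iff_integrable_sq hXmeas.aestronglyMeasurable).2 hX2int
    have hvar : variance X P = (∫ ω, X ω^2 ∂P) - (∫ ω, X ω ∂P)^2 := by
      rw [variance_eq_sub hmem2]
      rfl
    have hDbd : ∀ᵐ ω ∂P, ‖X ω^2 - t ω^2‖ ≤ (A^3 + ‖ξ ω‖^3)*(24/rn^3) := by
      filter_upwards [hXt] with ω hω
      obtain ⟨h1, h2, h3⟩ := hω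
      have e : X ω^2 - t ω^2 = (X ω - t ω)*(X ω + t ω) := by ring
      rw [Real.norm_eq_abs, e, abs_mul]
      have h4 : |X ω + t ω| ≤ 3*|t ω| := by
        calc |X ω + t ω| ≤ |X ω| + |t ω| := abs_add_le _ _
          _ ≤ 3*|t ω| := by linarith only [h2, abs_nonneg (t ω)]
      have h5 : |X ω - t ω| * |X ω + t ω| ≤ (2*t ω^2) * (3*|t ω|) :=
        mul_le_mul h3 h4 (abs_nonneg _) (by positivity)
      have h6 : (2*t ω^2)*(3*|t ω|) = 3*(2*|t ω|^3) := by
        rw [← sq_abs (t ω)]; ring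
      have h7 := htcube ω
      calc |X ω - t ω| * |X ω + t ω| ≤ 3*(2*|t ω|^3) := by rw [← h6]; exact h5
        _ ≤ 3*((A^3 + ‖ξ ω‖^3)*(8/rn^3)) := by linarith only [h7]
        _ = (A^3 + ‖ξ ω‖^3)*(24/rn^3) := by ring
    have hDint : Integrable (fun ω => X ω^2 - t ω^2) P := hX2int.sub ht2int
    have hg3int' : Integrable (fun ω => (A^3 + ‖ξ ω‖^3)*(24/rn^3)) P :=
      ((integrable_const (A^3)).add hmom3).mul_const _
    have hID : |∫ ω, (X ω^2 - t ω^2) ∂P| ≤ (A^3 + M)*(24/rn^3) := by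
      have hval : ∫ ω, (A^3 + ‖ξ ω‖^3)*(24/rn^3) ∂P = (A^3 + M)*(24/rn^3) := by
        rw [integral_mul_const, integral_add (integrable_const _) hmom3, integral_const]
        simp [hM_def]
      have h := norm_integral_le_of_norm_le hg3int' hDbd
      rwa [Real.norm_eq_abs, hval] at h
    have hIX2 : ∫ ω, X ω^2 ∂P = ((a/rn^2)^2 + q/rn^2) + ∫ ω, (X ω^2 - t ω^2) ∂P := by
      rw [← hIt2, ← integral_add ht2int hDint]
      congr 1
      funext ω
      ring
    have hIXbound : |∫ ω, X ω ∂P| ≤ C₂/rn^2 := by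
      have h1 : |rn^2 * (∫ ω, X ω ∂P)| ≤ C₂ := by
        have h2 : |a - 1/2*q| ≤ A + M2/2 := by
          rw [abs_le]
          constructor <;> [nlinarith only [hq0, hqM2, (abs_le.1 ha).1]; nlinarith only [hq0, hqM2, (abs_le.1 ha).2]]
        have h3 : C₁/rn ≤ C₁ := by
          rw [div_le_iff₀ hrn0]
          nlinarith only [hC₁, hrn1, mul_le_mul_of_nonneg_left hrn1 hC₁]
        calc |rn^2 * (∫ ω, X ω ∂P)|
            ≤ |rn^2 * (∫ ω, X ω ∂P) - (a - 1/2*q)| + |a - 1/2*q| := by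
              have := abs_sub_abs_le_abs_sub (rn^2 * (∫ ω, X ω ∂P)) (a - 1/2*q)
              have h4 := abs_add_le (rn^2 * (∫ ω, X ω ∂P) - (a - 1/2*q)) (a - 1/2*q)
              simpa using h4
          _ ≤ C₁/rn + (A + M2/2) := by linarith only [hmean_est, h2]
          _ ≤ C₂ := by rw [hC₂_def]; linarith only [h3]
      rw [abs_mul, abs_of_nonneg (by positivity : (0:ℝ) ≤ rn^2)] at h1
      rw [le_div_iff₀ (by positivity : (0:ℝ) < rn^2)]
      linarith only [h1]
    rw [hvar]
    have heq : rn^2 * ((∫ ω, X ω^2 ∂P) - (∫ ω, X ω ∂P)^2) - q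
        = a^2/rn^2 + rn^2 * (∫ ω, (X ω^2 - t ω^2) ∂P)
          - rn^2 * (∫ ω, X ω ∂P)^2 := by
      rw [hIX2]
      field_simp
      ring
    rw [heq]
    have k1 : |a^2/rn^2| ≤ A^2/rn := by
      rw [abs_div, abs_of_nonneg (sq_nonneg a), abs_of_nonneg (by positivity : (0:ℝ) ≤ rn^2)]
      rw [div_le_div_iff₀ (by positivity) hrn0]
      nlinarith only [mul_le_mul_of_nonneg_right ha2 hrn0.le,
        mul_nonneg (sq_nonneg A) (by nlinarith only [hrn1, sq_nonneg (rn - 1)] : (0:ℝ) ≤ rn^2 - rn)]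
    have k2 : |rn^2 * (∫ ω, (X ω^2 - t ω^2) ∂P)| ≤ 24*(A^3 + M)/rn := by
      rw [abs_mul, abs_of_nonneg (by positivity : (0:ℝ) ≤ rn^2)]
      calc rn^2 * |∫ ω, (X ω^2 - t ω^2) ∂P| ≤ rn^2 * ((A^3 + M)*(24/rn^3)) :=
            mul_le_mul_of_nonneg_left hID (by positivity)
        _ = 24*(A^3 + M)/rn := by field_simp
    have k3 : |rn^2 * (∫ ω, X ω ∂P)^2| ≤ C₂^2/rn := by
      have hsq : (∫ ω, X ω ∂P)^2 ≤ C₂^2/rn^4 := by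
        have h5 := mul_self_le_mul_self (abs_nonneg (∫ ω, X ω ∂P)) hIXbound
        calc (∫ ω, X ω ∂P)^2 = |∫ ω, X ω ∂P| * |∫ ω, X ω ∂P| := by
              rw [← abs_mul, abs_of_nonneg (mul_self_nonneg _), sq]
          _ ≤ (C₂/rn^2) * (C₂/rn^2) := h5
          _ = C₂^2/rn^4 := by ring
      rw [abs_mul, abs_of_nonneg (by positivity : (0:ℝ) ≤ rn^2),
        abs_of_nonneg (sq_nonneg _)]
      calc rn^2 * (∫ ω, X ω ∂P)^2 ≤ rn^2 * (C₂^2/rn^4) :=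
            mul_le_mul_of_nonneg_left hsq (by positivity)
        _ = C₂^2/rn^2 := by field_simp
        _ ≤ C₂^2/rn := by
            apply div_le_div_of_nonneg_left (by positivity) hrn0
              (by nlinarith only [hrn1, sq_nonneg (rn - 1)])
    calc |a^2/rn^2 + rn^2 * (∫ ω, (X ω^2 - t ω^2) ∂P) - rn^2 * (∫ ω, X ω ∂P)^2|
        ≤ |a^2/rn^2 + rn^2 * (∫ ω, (X ω^2 - t ω^2) ∂P)| + |rn^2 * (∫ ω, X ω ∂P)^2| :=
          abs_sub _ _
      _ ≤ (|a^2/rn^2| + |rn^2 * (∫ ω, (X ω^2 - t ω^2) ∂P)|) + |rn^2 * (∫ ω, X ω ∂P)^2| := by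
          linarith only [abs_add_le (a^2/rn^2) (rn^2 * (∫ ω, (X ω^2 - t ω^2) ∂P))]
      _ ≤ A^2/rn + 24*(A^3 + M)/rn + C₂^2/rn := by linarith only [k1, k2, k3]
      _ = C₃/rn := by rw [hC₃_def]; ring
      _ ≤ (C₁ + C₃ + 1)/rn := by gcongr <;> linarith only [hC₁, hC₃]
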